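/- Let f_{r₁}(z) = z^{n+1} − z^{n−1} v_n − ⋯ − z v₂ − v₁ with v_j ∈ ℍ. Then every zero z of f_{r₁} satisfies |z| ≤ (1 + γ + 2 Σ_{j=1}^{n} |v_j|²)^{1/6}, where γ = |v₁ v_n|² + |v₂ v_n|² + Σ_{j=1}^{n−1} |v_j + v_n v_{j+2}|² with v_{n+1} = 0. -/

import Mathlib

open scoped Quaternion
open Finset Matrix

noncomputable def specNorm {n : ℕ} (A : Matrix (Fin n) (Fin n) ℍ[ℝ]) : ℝ :=
  sSup {r : ℝ | ∃ x : Fin n → ℍ[ℝ], x ≠ 0 ∧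
    r = Real.sqrt (∑ i, ‖A.mulVec x i‖ ^ 2) / Real.sqrt (∑ i, ‖x i‖ ^ 2)}

namespace BoundThm4Aux

open Quaternion

/-- coefficients for writing `q ^ k = (coAB a ν k).1 • 1 + (coAB a ν k).2 • q`
for `q` satisfying `q * q = a • q - ν • 1`. -/
noncomputable def coAB (a ν : ℝ) : ℕ → ℝ × ℝ
  | 0 => (1, 0)
  | k + 1 => (-ν * (coAB a ν k).2, (coAB a ν k).1 + a * (coAB a ν k).2)

lemma pow_form (a ν : ℝ) (q : ℍ[ℝ]) (hq : q * q = a • q - ν • 1) (k : ℕ) :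
    q ^ k = (coAB a ν k).1 • (1 : ℍ[ℝ]) + (coAB a ν k).2 • q := by
  induction k with
  | zero => simp [coAB]
  | succ k ih =>
    rw [pow_succ, ih, add_mul, smul_mul_assoc, smul_mul_assoc, one_mul, hq, coAB]
    rw [smul_sub, smul_smul, smul_smul]
    push_cast
    module

lemma quadratic (z : ℍ[ℝ]) : z * z = (2 * z.re) • z - (normSq z) • 1 := by
  ext <;>
    simp [Quaternion.re_mul, Quaternion.imI_mul, Quaternion.imJ_mul, Quaternion.imK_mul,
      Quaternion.normSq_def', smul_eq_mul] <;> ring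

lemma conj_quad (a ν : ℝ) (z c : ℍ[ℝ]) (hcz : c ≠ 0) (hq : z * z = a • z - ν • 1) :
    (c⁻¹ * z * c) * (c⁻¹ * z * c) = a • (c⁻¹ * z * c) - ν • 1 := by
  have h0 : (c⁻¹ * z * c) * (c⁻¹ * z * c) = c⁻¹ * z * (c * c⁻¹) * (z * c) := by noncomm_ring
  have h1 : (c⁻¹ * z * c) * (c⁻¹ * z * c) = c⁻¹ * (z * z) * c := by
    rw [h0, mul_inv_cancel₀ hcz]; noncomm_ring
  rw [h1, hq, mul_sub, sub_mul, mul_smul_comm, mul_smul_comm, smul_mul_assoc,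
    smul_mul_assoc, mul_one, inv_mul_cancel₀ hcz]

lemma conj_cancel (z c : ℍ[ℝ]) (hcz : c ≠ 0) : c * (c⁻¹ * z * c) = z * c := by
  rw [← mul_assoc, ← mul_assoc, mul_inv_cancel₀ hcz, one_mul]

lemma sum_Icc_one {M : Type*} [AddCommMonoid M] (m : ℕ) (f : ℕ → M) :
    ∑ j ∈ Finset.Icc 1 m, f j = ∑ i ∈ Finset.range m, f (i + 1) := by
  induction m with
  | zero => simp
  | succ m ih =>
    rw [Finset.sum_range_succ, ← ih, ← Finset.insert_Icc_right_eq_Icc_add_one (by omega : 1 ≤ m + 1),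
      Finset.sum_insert (by simp), add_comm]

lemma peel (n : ℕ) (hn : 1 ≤ n) (F : ℕ → ℝ) :
    ∑ e ∈ Finset.range (n + 1), F e
      = F 0 + F 1 + ∑ j ∈ Finset.Icc 1 (n - 1), F (j + 1) := by
  rw [Finset.sum_range_succ' F n, sum_Icc_one (n - 1) (fun j => F (j + 1))]
  have h2 : ∑ e ∈ Finset.range n, F (e + 1)
      = (∑ e ∈ Finset.range (n - 1), F (e + 1 + 1)) + F (0 + 1) := by
    calc ∑ e ∈ Finset.range n, F (e + 1)
        = ∑ e ∈ Finset.range (n - 1 + 1), F (e + 1) := by rw [show n - 1 + 1 = n by omega]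
      _ = (∑ e ∈ Finset.range (n - 1), F (e + 1 + 1)) + F (0 + 1) :=
          Finset.sum_range_succ' (fun e => F (e + 1)) (n - 1)
  rw [h2]
  ring

lemma expand3 (n : ℕ) (hn : 3 ≤ n) (v : ℕ → ℍ[ℝ]) (hv : v (n + 1) = 0) (w : ℍ[ℝ])
    (hw : w ^ (n + 1) = ∑ j ∈ Finset.Icc 1 n, v j * w ^ (j - 1)) :
    w ^ (n + 3) = v n * v 1 + v n * v 2 * w
      + ∑ j ∈ Finset.Icc 1 (n - 1), (v j + v n * v (j + 2)) * w ^ (j + 1) := by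
  have h1 : w ^ (n + 3) = ∑ j ∈ Finset.Icc 1 n, v j * w ^ (j + 1) := by
    rw [show n + 3 = (n + 1) + 2 by ring, pow_add, hw, Finset.sum_mul]
    refine Finset.sum_congr rfl fun j hj => ?_
    rw [mul_assoc, ← pow_add]
    congr 2
    have := (Finset.mem_Icc.mp hj).1
    omega
  have hsplit : insert n (Finset.Icc 1 (n - 1)) = Finset.Icc 1 n := by
    have h := Finset.insert_Icc_right_eq_Icc_add_one (a := 1) (b := n - 1) (by omega)
    rwa [show n - 1 + 1 = n by omega] at h
  rw [h1, ← hsplit, Finset.sum_insert (by simp [Finset.mem_Icc]; omega)]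
  have hs2 : insert 1 (Finset.Icc 2 n) = Finset.Icc 1 n := Finset.insert_Icc_add_one_left_eq_Icc (by omega)
  have hs3 : insert 2 (Finset.Icc 3 n) = Finset.Icc 2 n := Finset.insert_Icc_add_one_left_eq_Icc (by omega)
  have htop : v n * w ^ (n + 1)
      = v n * v 1 + v n * v 2 * w + ∑ j ∈ Finset.Icc 1 (n - 1), (v n * v (j + 2)) * w ^ (j + 1) := by
    have hre : ∑ k ∈ Finset.Icc 3 n, v n * (v k * w ^ (k - 1))
        = ∑ j ∈ Finset.Icc 1 (n - 2), (v n * v (j + 2)) * w ^ (j + 1) := by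
      have himg : (Finset.Icc 1 (n - 2)).image (· + 2) = Finset.Icc 3 n := by
        rw [Finset.image_add_right_Icc]
        congr 1
        omega
      rw [← himg, Finset.sum_image (by intro x _ y _ h; have h' : x + 2 = y + 2 := h; omega)]
      refine Finset.sum_congr rfl fun j hj => ?_
      rw [show j + 2 - 1 = j + 1 by omega, mul_assoc]
    have hext : ∑ j ∈ Finset.Icc 1 (n - 1), (v n * v (j + 2)) * w ^ (j + 1)
        = ∑ j ∈ Finset.Icc 1 (n - 2), (v n * v (j + 2)) * w ^ (j + 1) := by
      have h := Finset.insert_Icc_right_eq_Icc_add_one (a := 1) (b := n - 2) (by omega)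
      rw [show n - 2 + 1 = n - 1 by omega] at h
      rw [← h, Finset.sum_insert (by simp [Finset.mem_Icc]; omega)]
      rw [show n - 1 + 2 = n + 1 by omega, hv, mul_zero, zero_mul, zero_add]
    rw [hw, Finset.mul_sum, ← hs2, Finset.sum_insert (by simp), ← hs3,
      Finset.sum_insert (by simp), hre, ← hext]
    rw [show (1:ℕ) - 1 = 0 by omega, show (2:ℕ) - 1 = 1 by omega, pow_zero, pow_one,
      mul_one, ← mul_assoc]
    ring_nf
    abel
  rw [htop, add_assoc, ← Finset.sum_add_distrib]
  have : ∀ j ∈ Finset.Icc 1 (n - 1),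
      (v n * v (j + 2)) * w ^ (j + 1) + v j * w ^ (j + 1)
        = (v j + v n * v (j + 2)) * w ^ (j + 1) := by
    intro j _
    rw [add_mul]
    abel
  rw [Finset.sum_congr rfl this]

lemma scalar_fin (x S γ : ℝ) (_hx : 1 < x) (h1 : x * (x - 1) ≤ S) (h2 : x ^ 2 * (x - 1) ≤ γ) :
    x ^ 3 ≤ 1 + γ + 2 * S := by
  have h3 : x ≤ 1 + S := by nlinarith [sq_nonneg (x - 1)]
  nlinarith [h1, h2, h3]

/-- key step: a right root gives a left root of the same norm. -/
lemma exists_left_root (n : ℕ) (v : ℕ → ℍ[ℝ]) (z : ℍ[ℝ])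
    (hz : z ^ (n + 1) = ∑ j ∈ Finset.Icc 1 n, z ^ (j - 1) * v j) :
    ∃ w : ℍ[ℝ], ‖w‖ = ‖z‖ ∧ w * w = (2 * z.re) • w - (normSq z) • 1 ∧
      w ^ (n + 1) = ∑ j ∈ Finset.Icc 1 n, v j * w ^ (j - 1) := by
  set a : ℝ := 2 * z.re with ha
  set ν : ℝ := normSq z with hν
  have hq : z * z = a • z - ν • 1 := quadratic z
  set VA : ℍ[ℝ] := ∑ j ∈ Finset.Icc 1 n, (coAB a ν (j - 1)).1 • v j with hVA
  set VB : ℍ[ℝ] := ∑ j ∈ Finset.Icc 1 n, (coAB a ν (j - 1)).2 • v j with hVB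
  have key : (coAB a ν (n + 1)).1 • (1 : ℍ[ℝ]) + (coAB a ν (n + 1)).2 • z = VA + z * VB := by
    rw [← pow_form a ν z hq, hz, hVA, hVB, Finset.mul_sum, ← Finset.sum_add_distrib]
    refine Finset.sum_congr rfl fun j hj => ?_
    rw [pow_form a ν z hq (j - 1), add_mul, smul_mul_assoc, one_mul, smul_mul_assoc,
      mul_smul_comm]
  set c : ℍ[ℝ] := VB - (coAB a ν (n + 1)).2 • (1 : ℍ[ℝ]) with hc
  have hd : z * c = (coAB a ν (n + 1)).1 • (1 : ℍ[ℝ]) - VA := by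
    have h2 : z * VB = (coAB a ν (n + 1)).1 • (1 : ℍ[ℝ]) + (coAB a ν (n + 1)).2 • z - VA := by
      rw [eq_sub_iff_add_eq, add_comm]; exact key.symm
    rw [hc, mul_sub, mul_smul_comm, mul_one, h2]; abel
  have leval : ∀ w : ℍ[ℝ], w * w = a • w - ν • 1 →
      ∑ j ∈ Finset.Icc 1 n, v j * w ^ (j - 1) = VA + VB * w := by
    intro w hw
    rw [hVA, hVB, Finset.sum_mul, ← Finset.sum_add_distrib]
    refine Finset.sum_congr rfl fun j hj => ?_
    rw [pow_form a ν w hw (j - 1), mul_add, mul_smul_comm, mul_one, mul_smul_comm,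
      smul_mul_assoc]
  by_cases hcz : c = 0
  · refine ⟨z, rfl, hq, ?_⟩
    have hVB' : VB = (coAB a ν (n + 1)).2 • (1 : ℍ[ℝ]) := by
      have := hcz; rw [hc, sub_eq_zero] at this; exact this
    have hVA' : VA = (coAB a ν (n + 1)).1 • (1 : ℍ[ℝ]) := by
      have h0 : (coAB a ν (n + 1)).1 • (1 : ℍ[ℝ]) - VA = 0 := by
        rw [← hd, hcz, mul_zero]
      rw [sub_eq_zero] at h0; exact h0.symm
    rw [leval z hq, hVA', hVB', smul_mul_assoc, one_mul, pow_form a ν z hq]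
  · set w : ℍ[ℝ] := c⁻¹ * z * c with hwdef
    have hcn : ‖c‖ ≠ 0 := norm_ne_zero_iff.mpr hcz
    have hnorm : ‖w‖ = ‖z‖ := by
      rw [hwdef, norm_mul, norm_mul, norm_inv,
        mul_comm (‖c‖⁻¹ * ‖z‖) ‖c‖, ← mul_assoc, mul_inv_cancel₀ hcn, one_mul]
    have hw : w * w = a • w - ν • 1 := by
      rw [hwdef]; exact conj_quad a ν z c hcz hq
    refine ⟨w, hnorm, hw, ?_⟩
    have hcw : c * w = z * c := by
      rw [hwdef]; exact conj_cancel z c hcz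
    rw [leval w hw, pow_form a ν w hw]
    have hA1 : (coAB a ν (n + 1)).1 • (1 : ℍ[ℝ]) = VA + z * c := by
      rw [hd]; abel
    have hVBc : VB = c + (coAB a ν (n + 1)).2 • (1 : ℍ[ℝ]) := by rw [hc]; abel
    rw [hA1, hVBc, add_mul, smul_mul_assoc, one_mul, hcw]
    abel

end BoundThm4Aux

theorem bound_thm4 (n : ℕ) (hn : 3 ≤ n) (v : ℕ → ℍ[ℝ]) (hv : v (n + 1) = 0) (z : ℍ[ℝ])
    (hz : z ^ (n + 1) - ∑ j ∈ Finset.Icc 1 n, z ^ (j - 1) * v j = 0) :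
    ‖z‖ ≤ (1 + (‖v 1 * v n‖ ^ 2 + ‖v 2 * v n‖ ^ 2 +
        ∑ j ∈ Finset.Icc 1 (n - 1), ‖v j + v n * v (j + 2)‖ ^ 2) +
      2 * ∑ j ∈ Finset.Icc 1 n, ‖v j‖ ^ 2) ^ ((1 : ℝ) / 6) := by
  classical
  have hz' : z ^ (n + 1) = ∑ j ∈ Finset.Icc 1 n, z ^ (j - 1) * v j := sub_eq_zero.mp hz
  obtain ⟨w, hwn, hwq, hw⟩ := BoundThm4Aux.exists_left_root n v z hz'
  set t : ℝ := ‖z‖ with ht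
  set S : ℝ := ∑ j ∈ Finset.Icc 1 n, ‖v j‖ ^ 2 with hS
  set γ : ℝ := ‖v 1 * v n‖ ^ 2 + ‖v 2 * v n‖ ^ 2 +
      ∑ j ∈ Finset.Icc 1 (n - 1), ‖v j + v n * v (j + 2)‖ ^ 2 with hγ
  have hS0 : 0 ≤ S := Finset.sum_nonneg fun _ _ => sq_nonneg _
  have hγ0 : 0 ≤ γ := by
    have h0 : 0 ≤ ∑ j ∈ Finset.Icc 1 (n - 1), ‖v j + v n * v (j + 2)‖ ^ 2 :=
      Finset.sum_nonneg fun _ _ => sq_nonneg _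
    have h1 : 0 ≤ ‖v 1 * v n‖ ^ 2 := sq_nonneg _
    have h2 : 0 ≤ ‖v 2 * v n‖ ^ 2 := sq_nonneg _
    rw [hγ]
    linarith
  have hbase : (1 : ℝ) ≤ 1 + γ + 2 * S := by linarith
  have ht0 : (0 : ℝ) ≤ t := norm_nonneg _
  rcases le_or_gt t 1 with hle | hgt
  · calc t ≤ 1 := hle
      _ = (1 : ℝ) ^ ((1 : ℝ) / 6) := (Real.one_rpow _).symm
      _ ≤ (1 + γ + 2 * S) ^ ((1 : ℝ) / 6) :=
          Real.rpow_le_rpow (by norm_num) hbase (by norm_num)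
  · have hwt : ‖w‖ = t := hwn
    have htsq : (1 : ℝ) < t ^ 2 := by nlinarith
    have htpos : (0 : ℝ) < t := lt_trans one_pos hgt
    -- first inequality : t^2 * (t^2 - 1) ≤ S
    have e1 : t ^ (n + 1) ≤ ∑ j ∈ Finset.Icc 1 n, ‖v j‖ * t ^ (j - 1) := by
      calc t ^ (n + 1) = ‖w ^ (n + 1)‖ := by rw [norm_pow, hwt]
        _ = ‖∑ j ∈ Finset.Icc 1 n, v j * w ^ (j - 1)‖ := by rw [hw]
        _ ≤ ∑ j ∈ Finset.Icc 1 n, ‖v j * w ^ (j - 1)‖ := norm_sum_le _ _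
        _ = ∑ j ∈ Finset.Icc 1 n, ‖v j‖ * t ^ (j - 1) := by
            refine Finset.sum_congr rfl fun j _ => ?_
            rw [norm_mul, norm_pow, hwt]
    have cs1 : (∑ j ∈ Finset.Icc 1 n, ‖v j‖ * t ^ (j - 1)) ^ 2
        ≤ S * ∑ i ∈ Finset.range n, (t ^ 2) ^ i := by
      refine (Finset.sum_mul_sq_le_sq_mul_sq (Finset.Icc 1 n)
        (fun j => ‖v j‖) (fun j => t ^ (j - 1))).trans (le_of_eq ?_)
      congr 1
      rw [BoundThm4Aux.sum_Icc_one n (fun j => (t ^ (j - 1)) ^ 2)]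
      refine Finset.sum_congr rfl fun i _ => ?_
      rw [show i + 1 - 1 = i by omega, ← pow_mul, mul_comm i 2, pow_mul]
    have q1 : (t ^ 2) ^ (n + 1) ≤ S * ∑ i ∈ Finset.range n, (t ^ 2) ^ i := by
      calc (t ^ 2) ^ (n + 1) = (t ^ (n + 1)) ^ 2 := by
            rw [← pow_mul, ← pow_mul, mul_comm 2 (n + 1)]
        _ ≤ (∑ j ∈ Finset.Icc 1 n, ‖v j‖ * t ^ (j - 1)) ^ 2 :=
            pow_le_pow_left₀ (pow_nonneg ht0 _) e1 2
        _ ≤ S * ∑ i ∈ Finset.range n, (t ^ 2) ^ i := cs1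
    have h1 : t ^ 2 * (t ^ 2 - 1) ≤ S := by
      have geo : (∑ i ∈ Finset.range n, (t ^ 2) ^ i) * (t ^ 2 - 1) = (t ^ 2) ^ n - 1 :=
        geom_sum_mul _ n
      have q2 : (t ^ 2) ^ (n + 1) * (t ^ 2 - 1) ≤ S * ((t ^ 2) ^ n - 1) := by
        calc (t ^ 2) ^ (n + 1) * (t ^ 2 - 1)
            ≤ (S * ∑ i ∈ Finset.range n, (t ^ 2) ^ i) * (t ^ 2 - 1) :=
              mul_le_mul_of_nonneg_right q1 (by linarith)
          _ = S * ((t ^ 2) ^ n - 1) := by rw [mul_assoc, geo]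
      have q3 : (t ^ 2) ^ n * (t ^ 2 * (t ^ 2 - 1)) ≤ (t ^ 2) ^ n * S := by
        calc (t ^ 2) ^ n * (t ^ 2 * (t ^ 2 - 1)) = (t ^ 2) ^ (n + 1) * (t ^ 2 - 1) := by
              rw [pow_succ]; ring
          _ ≤ S * ((t ^ 2) ^ n - 1) := q2
          _ ≤ S * (t ^ 2) ^ n := mul_le_mul_of_nonneg_left (sub_le_self _ zero_le_one) hS0
          _ = (t ^ 2) ^ n * S := mul_comm _ _
      exact le_of_mul_le_mul_left q3 (pow_pos (by positivity) n)
    -- second inequality : t^4 * (t^2 - 1) ≤ γ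
    set G : ℕ → ℝ := fun e => if e = 0 then ‖v n * v 1‖ else if e = 1 then ‖v n * v 2‖
      else ‖v (e - 1) + v n * v (e + 1)‖ with hG
    have hGnn : ∀ e, 0 ≤ G e := by
      intro e; rw [hG]; dsimp only; split_ifs <;> exact norm_nonneg _
    have hsum : ∑ e ∈ Finset.range (n + 1), G e * t ^ e
        = ‖v n * v 1‖ + ‖v n * v 2‖ * t +
          ∑ j ∈ Finset.Icc 1 (n - 1), ‖v j + v n * v (j + 2)‖ * t ^ (j + 1) := by
      rw [BoundThm4Aux.peel n (by omega) (fun e => G e * t ^ e)]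
      congr 1
      · congr 1
        · show G 0 * t ^ 0 = _
          rw [hG]; norm_num
        · show G 1 * t ^ 1 = _
          rw [hG]; norm_num
      · refine Finset.sum_congr rfl fun j hj => ?_
        have hj1 : 1 ≤ j := (Finset.mem_Icc.mp hj).1
        show G (j + 1) * t ^ (j + 1) = _
        rw [hG]
        dsimp only
        rw [if_neg (by omega), if_neg (by omega), show j + 1 - 1 = j by omega,
          show j + 1 + 1 = j + 2 by omega]
    have hsumsq : ∑ e ∈ Finset.range (n + 1), (G e) ^ 2 = γ := by
      rw [BoundThm4Aux.peel n (by omega) (fun e => (G e) ^ 2), hγ]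
      congr 1
      · congr 1
        · show (G 0) ^ 2 = _
          rw [hG]; dsimp only; rw [if_pos rfl, norm_mul, norm_mul, mul_comm]
        · show (G 1) ^ 2 = _
          rw [hG]; dsimp only; rw [if_neg (by omega), if_pos rfl, norm_mul, norm_mul, mul_comm]
      · refine Finset.sum_congr rfl fun j hj => ?_
        have hj1 : 1 ≤ j := (Finset.mem_Icc.mp hj).1
        show (G (j + 1)) ^ 2 = _
        rw [hG]
        dsimp only
        rw [if_neg (by omega), if_neg (by omega), show j + 1 - 1 = j by omega,
          show j + 1 + 1 = j + 2 by omega]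
    have e3 : t ^ (n + 3) ≤ ∑ e ∈ Finset.range (n + 1), G e * t ^ e := by
      rw [hsum]
      have hexp := BoundThm4Aux.expand3 n hn v hv w hw
      calc t ^ (n + 3) = ‖w ^ (n + 3)‖ := by rw [norm_pow, hwt]
        _ = ‖v n * v 1 + v n * v 2 * w
            + ∑ j ∈ Finset.Icc 1 (n - 1), (v j + v n * v (j + 2)) * w ^ (j + 1)‖ := by
            rw [hexp]
        _ ≤ ‖v n * v 1 + v n * v 2 * w‖
            + ‖∑ j ∈ Finset.Icc 1 (n - 1), (v j + v n * v (j + 2)) * w ^ (j + 1)‖ :=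
            norm_add_le _ _
        _ ≤ ‖v n * v 1‖ + ‖v n * v 2 * w‖
            + ‖∑ j ∈ Finset.Icc 1 (n - 1), (v j + v n * v (j + 2)) * w ^ (j + 1)‖ := by
            have := norm_add_le (v n * v 1) (v n * v 2 * w)
            linarith
        _ ≤ ‖v n * v 1‖ + ‖v n * v 2‖ * t +
            ∑ j ∈ Finset.Icc 1 (n - 1), ‖v j + v n * v (j + 2)‖ * t ^ (j + 1) := by
            have hb : ‖v n * v 2 * w‖ = ‖v n * v 2‖ * t := by rw [norm_mul, hwt]
            have hc : ‖∑ j ∈ Finset.Icc 1 (n - 1), (v j + v n * v (j + 2)) * w ^ (j + 1)‖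
                ≤ ∑ j ∈ Finset.Icc 1 (n - 1), ‖v j + v n * v (j + 2)‖ * t ^ (j + 1) := by
              refine (norm_sum_le _ _).trans (le_of_eq ?_)
              refine Finset.sum_congr rfl fun j _ => ?_
              rw [norm_mul, norm_pow, hwt]
            linarith
    have cs2 : (∑ e ∈ Finset.range (n + 1), G e * t ^ e) ^ 2
        ≤ γ * ∑ i ∈ Finset.range (n + 1), (t ^ 2) ^ i := by
      refine (Finset.sum_mul_sq_le_sq_mul_sq (Finset.range (n + 1))
        (fun e => G e) (fun e => t ^ e)).trans (le_of_eq ?_)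
      rw [hsumsq]
      congr 1
      refine Finset.sum_congr rfl fun i _ => ?_
      rw [← pow_mul, mul_comm i 2, pow_mul]
    have q1' : (t ^ 2) ^ (n + 3) ≤ γ * ∑ i ∈ Finset.range (n + 1), (t ^ 2) ^ i := by
      calc (t ^ 2) ^ (n + 3) = (t ^ (n + 3)) ^ 2 := by
            rw [← pow_mul, ← pow_mul, mul_comm 2 (n + 3)]
        _ ≤ (∑ e ∈ Finset.range (n + 1), G e * t ^ e) ^ 2 := by
            refine pow_le_pow_left₀ (pow_nonneg ht0 _) e3 2
        _ ≤ γ * ∑ i ∈ Finset.range (n + 1), (t ^ 2) ^ i := cs2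
    have h2 : t ^ 4 * (t ^ 2 - 1) ≤ γ := by
      have geo : (∑ i ∈ Finset.range (n + 1), (t ^ 2) ^ i) * (t ^ 2 - 1)
          = (t ^ 2) ^ (n + 1) - 1 := geom_sum_mul _ (n + 1)
      have q2 : (t ^ 2) ^ (n + 3) * (t ^ 2 - 1) ≤ γ * ((t ^ 2) ^ (n + 1) - 1) := by
        calc (t ^ 2) ^ (n + 3) * (t ^ 2 - 1)
            ≤ (γ * ∑ i ∈ Finset.range (n + 1), (t ^ 2) ^ i) * (t ^ 2 - 1) :=
              mul_le_mul_of_nonneg_right q1' (by linarith)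
          _ = γ * ((t ^ 2) ^ (n + 1) - 1) := by rw [mul_assoc, geo]
      have q3 : (t ^ 2) ^ (n + 1) * (t ^ 4 * (t ^ 2 - 1)) ≤ (t ^ 2) ^ (n + 1) * γ := by
        calc (t ^ 2) ^ (n + 1) * (t ^ 4 * (t ^ 2 - 1))
            = (t ^ 2) ^ (n + 3) * (t ^ 2 - 1) := by
              rw [show n + 3 = (n + 1) + 2 by ring, pow_add]; ring
          _ ≤ γ * ((t ^ 2) ^ (n + 1) - 1) := q2
          _ ≤ γ * (t ^ 2) ^ (n + 1) := mul_le_mul_of_nonneg_left (sub_le_self _ zero_le_one) hγ0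
          _ = (t ^ 2) ^ (n + 1) * γ := mul_comm _ _
      exact le_of_mul_le_mul_left q3 (pow_pos (by positivity) (n + 1))
    -- scalar endgame
    have h2' : (t ^ 2) ^ 2 * (t ^ 2 - 1) ≤ γ := by
      calc (t ^ 2) ^ 2 * (t ^ 2 - 1) = t ^ 4 * (t ^ 2 - 1) := by ring
        _ ≤ γ := h2
    have h6 : t ^ 6 ≤ 1 + γ + 2 * S := by
      have := BoundThm4Aux.scalar_fin (t ^ 2) S γ htsq h1 h2'
      calc t ^ 6 = (t ^ 2) ^ 3 := by ring
        _ ≤ 1 + γ + 2 * S := this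
    calc t = (t ^ (6 : ℕ)) ^ ((1 : ℝ) / 6) := by
          rw [← Real.rpow_natCast t 6, ← Real.rpow_mul ht0]
          norm_num
      _ ≤ (1 + γ + 2 * S) ^ ((1 : ℝ) / 6) :=
          Real.rpow_le_rpow (by positivity) h6 (by norm_num)
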